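/- Let n ≥ 5 with n ≡ 0 (mod 5), and let c ∈ F_{2^n} satisfy c⁵ + c⁴ + c³ + c² + 1 = 0 (such c exists, and automatically c ≠ 0, 1 and c² + c + 1 ≠ 0). Then the c-BCT entry of the (0,1)-swapped inverse function satisfies B_c(a, b) = 5 for a = c/(c² + c + 1) and b = c² + c + 1. -/

import Mathlib

open Finset

/-- The (0,1)-swapped inverse function on a field of characteristic 2 with `2^n` elements:
`G(x) = x^(2^n-2) + x^(2^n-1) + (x+1)^(2^n-1)`. -/
def swappedInv {F : Type*} [Field F] (n : ℕ) (x : F) : F :=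
  x ^ (2 ^ n - 2) + x ^ (2 ^ n - 1) + (x + 1) ^ (2 ^ n - 1)

/-- The `c`-DDT entry of the swapped inverse function at `(a, b)`:
the number of `x` with `G(x+a) + c·G(x) = b`. -/
def cDDT (F : Type*) [Field F] [Fintype F] [DecidableEq F] (n : ℕ) (c a b : F) : ℕ :=
  (univ.filter (fun x : F => swappedInv n (x + a) + c * swappedInv n x = b)).card

/-- The `c`-BCT entry of the swapped inverse function at `(a, b)`:
the number of pairs `(x, γ)` with `G(x+γ) + c·G(x) = b` and `G(x+γ+a) + c⁻¹·G(x+a) = b`. -/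
def cBCT (F : Type*) [Field F] [Fintype F] [DecidableEq F] (n : ℕ) (c a b : F) : ℕ :=
  (univ.filter (fun p : F × F =>
    swappedInv n (p.1 + p.2) + c * swappedInv n p.1 = b ∧
    swappedInv n (p.1 + p.2 + a) + c⁻¹ * swappedInv n (p.1 + a) = b)).card

/-- The absolute trace map on a field with `2^n` elements: `Tr(x) = ∑_{i=0}^{n-1} x^(2^i)`. -/
def trF {F : Type*} [Field F] (n : ℕ) (x : F) : F :=
  ∑ i ∈ Finset.range n, x ^ (2 ^ i)

section
variable {F : Type*} [Field F] [Fintype F] [DecidableEq F]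

omit [DecidableEq F] in
theorem char2 (n : ℕ) (hn : 5 ≤ n) (hF : Fintype.card F = 2 ^ n) : (2 : F) = 0 := by
  have hp : (ringChar F).Prime := CharP.char_is_prime F (ringChar F)
  obtain ⟨k, hk⟩ := FiniteField.card F (ringChar F)
  have hdvd : ringChar F ∣ 2 ^ n := by
    rw [← hF, hk.2]
    exact dvd_pow_self _ (by positivity)
  have h2 : ringChar F = 2 :=
    ((Nat.prime_dvd_prime_iff_eq hp Nat.prime_two).mp (hp.dvd_of_dvd_pow hdvd))
  have := ringChar.eq_iff.mp h2
  exact CharP.cast_eq_zero F 2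

theorem Geval (n : ℕ) (hn : 5 ≤ n) (hF : Fintype.card F = 2 ^ n) (x : F) :
    swappedInv n x = if x = 0 then 1 else if x = 1 then 0 else x⁻¹ := by
  have htwo : (2 : F) = 0 := char2 n hn hF
  have hq2 : 32 ≤ 2 ^ n := by
    calc (32:ℕ) = 2 ^ 5 := by norm_num
    _ ≤ 2 ^ n := Nat.pow_le_pow_right (by norm_num) hn
  split_ifs with h0 h1
  · subst h0
    have e1 : 2 ^ n - 2 ≠ 0 := by omega
    have e2 : 2 ^ n - 1 ≠ 0 := by omega
    simp [swappedInv, zero_pow, e1, e2]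
  · subst h1
    have h11 : (1 + 1 : F) = 0 := by linear_combination htwo
    have e2 : 2 ^ n - 1 ≠ 0 := by omega
    simp [swappedInv, h11, zero_pow, e2]
  · have hx1 : x ^ (2 ^ n - 1) = 1 := by
      have := FiniteField.pow_card_sub_one_eq_one x h0
      rwa [hF] at this
    have hxx : x + 1 ≠ 0 := by
      intro h
      exact h1 (by linear_combination h - htwo)
    have hx2 : (x + 1) ^ (2 ^ n - 1) = 1 := by
      have := FiniteField.pow_card_sub_one_eq_one (x+1) hxx
      rwa [hF] at this
    have hxinv : x ^ (2 ^ n - 2) = x⁻¹ := by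
      have h : x ^ (2 ^ n - 2) * x = 1 := by
        rw [← pow_succ]
        have h' : 2 ^ n - 2 + 1 = 2 ^ n - 1 := by omega
        rw [h', hx1]
      field_simp
      linear_combination h
    rw [swappedInv, hxinv, hx1, hx2]
    linear_combination htwo
end

open Polynomial in

theorem exists_c {F : Type*} [Field F] [Fintype F] [DecidableEq F] (n : ℕ) (hn : 5 ≤ n)
    (hn5 : 5 ∣ n) (hF : Fintype.card F = 2 ^ n) (htwo : (2:F) = 0) :
    ∃ c : F, c ^ 5 + c ^ 4 + c ^ 3 + c ^ 2 + 1 = 0 := by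
  have h2X : (2 : F[X]) = 0 := by
    have h : ((2:F[X])) = C (2:F) := by
      rw [map_ofNat]
    rw [h, htwo, map_zero]
  set P : F[X] := X^5 + X^4 + X^3 + X^2 + 1 with hPdef
  set U : F[X] := X^27 + X^26 + X^23 + X^20 + X^19 + X^18 + X^17 + X^16 + X^14 + X^13 + X^12 + X^8 + X^6 + X^4 + X^3 + X with hUdef
  have hPU : P * U = X^(32:ℕ) - X := by
    rw [hPdef, hUdef]
    linear_combination (X^31 + X^30 + X^29 + X^28 + X^27 + X^26 + X^25 + X^24 + 2 * X^23 + 2 * X^22 + 2 * X^21 + 2 * X^20 + 2 * X^19 + 2 * X^18 + 2 * X^17 + 2 * X^16 + X^15 + X^14 + X^13 + X^12 + X^11 + X^10 + X^9 + 2 * X^8 + X^7 + 2 * X^6 + X^5 + X^4 + X^3 + X : F[X]) * h2X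
  obtain ⟨k, hk⟩ : (31:ℕ) ∣ 2 ^ n - 1 := by
    obtain ⟨m, hm⟩ := hn5
    have : 2 ^ n = 32 ^ m := by rw [hm, pow_mul]; norm_num
    rw [this]
    simpa using Nat.sub_dvd_pow_sub_pow 32 1 m
  have hq1 : 1 ≤ 2 ^ n := Nat.one_le_two_pow
  have hdvd1 : (X^(32:ℕ) - X : F[X]) ∣ X^(2^n) - X := by
    have h1 : (X^(32:ℕ) - X : F[X]) = X * (X^(31:ℕ) - 1) := by ring
    have h2 : (X^(2^n) - X : F[X]) = X * ((X^(31:ℕ))^k - 1) := by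
      rw [← pow_mul, ← hk]
      have h' : 2 ^ n = 2 ^ n - 1 + 1 := by omega
      conv_lhs => rw [h', pow_succ]
      ring
    rw [h1, h2]
    exact mul_dvd_mul_left _ (by simpa using sub_dvd_pow_sub_pow (X^(31:ℕ) : F[X]) 1 k)
  have hne : (X^(2^n) - X : F[X]) ≠ 0 := FiniteField.X_pow_card_sub_X_ne_zero _ (by
    calc 1 < 32 := by norm_num
    _ ≤ 2 ^ n := by calc (32:ℕ) = 2^5 := by norm_num
                       _ ≤ 2 ^ n := Nat.pow_le_pow_right (by norm_num) hn)
  have hsplits : Splits (X^(2^n) - X : F[X]) := by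
    rw [splits_iff_card_roots]
    have hr := FiniteField.roots_X_pow_card_sub_X F
    rw [hF] at hr
    rw [hr, FiniteField.X_pow_card_sub_X_natDegree_eq]
    · simpa using hF
    · calc 1 < 32 := by norm_num
        _ ≤ 2 ^ n := by calc (32:ℕ) = 2^5 := by norm_num
                          _ ≤ 2 ^ n := Nat.pow_le_pow_right (by norm_num) hn
  have hPdvd : P ∣ X^(2^n) - X := hPU ▸ (dvd_mul_right P U) |>.trans hdvd1
  have hPsplits : Splits P := hsplits.of_dvd hne hPdvd
  have hdeg : P.degree ≠ 0 := by
    have : P.natDegree = 5 := by rw [hPdef]; compute_degree!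
    intro h
    rw [degree_eq_natDegree (fun h0 => by simp [h0] at this), this] at h
    exact (by norm_num : (5:ℤ) ≠ 0) (by exact_mod_cast h)
  obtain ⟨c, hc⟩ := hPsplits.exists_eval_eq_zero hdeg
  refine ⟨c, ?_⟩
  have := hc
  simp only [hPdef, eval₂_add, eval₂_pow, eval₂_X, eval₂_one, RingHom.id_apply, eval_add, eval_pow, eval_X, eval_one] at this
  exact this

set_option maxHeartbeats 2000000 in
theorem main_count {F : Type*} [Field F] [Fintype F] [DecidableEq F] (n : ℕ) (hn : 5 ≤ n)
    (hF : Fintype.card F = 2 ^ n) (c : F) (hc : c ^ 5 + c ^ 4 + c ^ 3 + c ^ 2 + 1 = 0) :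
    cBCT F n c (c / (c ^ 2 + c + 1)) (c ^ 2 + c + 1) = 5 := by
  have htwo : (2:F) = 0 := char2 n hn hF
  have nz2 : (c : F) ≠ 0 := by
    intro h
    exact one_ne_zero (α := F) (by linear_combination (c^4 + c^3 + c^2 + c) * h + (1) * hc + (-1 * c^5 - 1 * c^4 - 1 * c^3 - 1 * c^2) * htwo)
  have neo2 : (c : F) ≠ 1 := by
    intro h
    exact one_ne_zero (α := F) (by linear_combination (c^4 + c^2) * h + (1) * hc + (-1 * c^5 - 1 * c^3) * htwo)
  have nz3 : (c + 1 : F) ≠ 0 := by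
    intro h
    exact one_ne_zero (α := F) (by linear_combination (c^4 + c^2) * h + (1) * hc + (-1 * c^5 - 1 * c^4 - 1 * c^3 - 1 * c^2) * htwo)
  have neo3 : (c + 1 : F) ≠ 1 := by
    intro h
    exact one_ne_zero (α := F) (by linear_combination (c^4 + c^3 + c^2 + c) * h + (1) * hc + (-1 * c^5 - 1 * c^4 - 1 * c^3 - 1 * c^2) * htwo)
  have nz4 : (c^2 : F) ≠ 0 := by
    intro h
    exact one_ne_zero (α := F) (by linear_combination (c^3 + c^2 + c + 1) * h + (1) * hc + (-1 * c^5 - 1 * c^4 - 1 * c^3 - 1 * c^2) * htwo)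
  have neo4 : (c^2 : F) ≠ 1 := by
    intro h
    exact one_ne_zero (α := F) (by linear_combination (c^3 + c^2) * h + (1) * hc + (-1 * c^5 - 1 * c^4) * htwo)
  have nz5 : (c^2 + 1 : F) ≠ 0 := by
    intro h
    exact one_ne_zero (α := F) (by linear_combination (c^3 + c^2) * h + (1) * hc + (-1 * c^5 - 1 * c^4 - 1 * c^3 - 1 * c^2) * htwo)
  have neo5 : (c^2 + 1 : F) ≠ 1 := by
    intro h
    exact one_ne_zero (α := F) (by linear_combination (c^3 + c^2 + c + 1) * h + (1) * hc + (-1 * c^5 - 1 * c^4 - 1 * c^3 - 1 * c^2) * htwo)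
  have nz6 : (c^2 + c : F) ≠ 0 := by
    intro h
    exact one_ne_zero (α := F) (by linear_combination (c^3 + c) * h + (1) * hc + (-1 * c^5 - 1 * c^4 - 1 * c^3 - 1 * c^2) * htwo)
  have neo6 : (c^2 + c : F) ≠ 1 := by
    intro h
    exact one_ne_zero (α := F) (by linear_combination (c^4 + c^3 + c) * h + (c + 1) * hc + (-1 * c^6 - 2 * c^5 - 1 * c^4 - 1 * c^3 - 1 * c^2) * htwo)
  have nz7 : (c^2 + c + 1 : F) ≠ 0 := by
    intro h
    exact one_ne_zero (α := F) (by linear_combination (c^4 + c^3 + c) * h + (c + 1) * hc + (-1 * c^6 - 2 * c^5 - 2 * c^4 - 2 * c^3 - 1 * c^2 - 1 * c) * htwo)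
  have neo7 : (c^2 + c + 1 : F) ≠ 1 := by
    intro h
    exact one_ne_zero (α := F) (by linear_combination (c^3 + c) * h + (1) * hc + (-1 * c^5 - 1 * c^4 - 1 * c^3 - 1 * c^2) * htwo)
  have nz8 : (c^3 : F) ≠ 0 := by
    intro h
    exact one_ne_zero (α := F) (by linear_combination (c^4 + c^3 + 1) * h + (c^2 + 1) * hc + (-1 * c^7 - 1 * c^6 - 1 * c^5 - 1 * c^4 - 1 * c^3 - 1 * c^2) * htwo)
  have neo8 : (c^3 : F) ≠ 1 := by
    intro h
    exact one_ne_zero (α := F) (by linear_combination (c^4 + c^3 + c^2 + 1) * h + (c^2) * hc + (-1 * c^7 - 1 * c^6 - 1 * c^5 + 1) * htwo)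
  have nz9 : (c^3 + 1 : F) ≠ 0 := by
    intro h
    exact one_ne_zero (α := F) (by linear_combination (c^4 + c^3 + c^2 + 1) * h + (c^2) * hc + (-1 * c^7 - 1 * c^6 - 1 * c^5 - 1 * c^4 - 1 * c^3 - 1 * c^2) * htwo)
  have neo9 : (c^3 + 1 : F) ≠ 1 := by
    intro h
    exact one_ne_zero (α := F) (by linear_combination (c^4 + c^3 + 1) * h + (c^2 + 1) * hc + (-1 * c^7 - 1 * c^6 - 1 * c^5 - 1 * c^4 - 1 * c^3 - 1 * c^2) * htwo)
  have nz10 : (c^3 + c : F) ≠ 0 := by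
    intro h
    exact one_ne_zero (α := F) (by linear_combination (c^2 + c) * h + (1) * hc + (-1 * c^5 - 1 * c^4 - 1 * c^3 - 1 * c^2) * htwo)
  have neo10 : (c^3 + c : F) ≠ 1 := by
    intro h
    exact one_ne_zero (α := F) (by linear_combination (c^4 + c^3 + c + 1) * h + (c^2) * hc + (-1 * c^7 - 1 * c^6 - 1 * c^5 - 1 * c^4 - 1 * c^2 + 1) * htwo)
  have nz11 : (c^3 + c + 1 : F) ≠ 0 := by
    intro h
    exact one_ne_zero (α := F) (by linear_combination (c^4 + c^3 + c + 1) * h + (c^2) * hc + (-1 * c^7 - 1 * c^6 - 1 * c^5 - 2 * c^4 - 1 * c^3 - 1 * c^2 - 1 * c) * htwo)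
  have neo11 : (c^3 + c + 1 : F) ≠ 1 := by
    intro h
    exact one_ne_zero (α := F) (by linear_combination (c^2 + c) * h + (1) * hc + (-1 * c^5 - 1 * c^4 - 1 * c^3 - 1 * c^2) * htwo)
  have nz13 : (c^3 + c^2 + 1 : F) ≠ 0 := by
    intro h
    exact one_ne_zero (α := F) (by linear_combination (c^3 + c^2 + c) * h + (c + 1) * hc + (-1 * c^6 - 2 * c^5 - 2 * c^4 - 2 * c^3 - 1 * c^2 - 1 * c) * htwo)
  have neo13 : (c^3 + c^2 + 1 : F) ≠ 1 := by
    intro h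
    exact one_ne_zero (α := F) (by linear_combination (c^2 + 1) * h + (1) * hc + (-1 * c^5 - 1 * c^4 - 1 * c^3 - 1 * c^2) * htwo)
  have nz15 : (c^3 + c^2 + c + 1 : F) ≠ 0 := by
    intro h
    exact one_ne_zero (α := F) (by linear_combination (c^2) * h + (1) * hc + (-1 * c^5 - 1 * c^4 - 1 * c^3 - 1 * c^2) * htwo)
  have neo15 : (c^3 + c^2 + c + 1 : F) ≠ 1 := by
    intro h
    exact one_ne_zero (α := F) (by linear_combination (c^3 + c^2 + 1) * h + (c + 1) * hc + (-1 * c^6 - 2 * c^5 - 2 * c^4 - 2 * c^3 - 1 * c^2 - 1 * c) * htwo)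
  have nz16 : (c^4 : F) ≠ 0 := by
    intro h
    exact one_ne_zero (α := F) (by linear_combination (c^4 + c) * h + (c^3 + c^2 + 1) * hc + (-1 * c^8 - 1 * c^7 - 1 * c^6 - 2 * c^5 - 1 * c^4 - 1 * c^3 - 1 * c^2) * htwo)
  have neo16 : (c^4 : F) ≠ 1 := by
    intro h
    exact one_ne_zero (α := F) (by linear_combination (c^4 + c^2 + c + 1) * h + (c^3 + c^2 + c) * hc + (-1 * c^8 - 1 * c^7 - 2 * c^6 - 2 * c^5 - 1 * c^4 - 1 * c^3 + 1) * htwo)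
  have nz19 : (c^4 + c + 1 : F) ≠ 0 := by
    intro h
    exact one_ne_zero (α := F) (by linear_combination (c^4 + c^2 + c) * h + (c^3 + c^2 + c + 1) * hc + (-1 * c^8 - 1 * c^7 - 2 * c^6 - 3 * c^5 - 2 * c^4 - 2 * c^3 - 2 * c^2 - 1 * c) * htwo)
  have neo19 : (c^4 + c + 1 : F) ≠ 1 := by
    intro h
    exact one_ne_zero (α := F) (by linear_combination (c^4) * h + (c^3 + c^2 + 1) * hc + (-1 * c^8 - 1 * c^7 - 1 * c^6 - 2 * c^5 - 1 * c^4 - 1 * c^3 - 1 * c^2) * htwo)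
  have nz20 : (c^4 + c^2 : F) ≠ 0 := by
    intro h
    exact one_ne_zero (α := F) (by linear_combination (c + 1) * h + (1) * hc + (-1 * c^5 - 1 * c^4 - 1 * c^3 - 1 * c^2) * htwo)
  have neo20 : (c^4 + c^2 : F) ≠ 1 := by
    intro h
    exact one_ne_zero (α := F) (by linear_combination (c^4 + c^3 + c^2 + c + 1) * h + (c^3 + c) * hc + (-1 * c^8 - 1 * c^7 - 2 * c^6 - 2 * c^5 - 1 * c^4 - 1 * c^3 + 1) * htwo)
  have nz26 : (c^4 + c^3 + c : F) ≠ 0 := by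
    intro h
    exact one_ne_zero (α := F) (by linear_combination (c^2 + c + 1) * h + (c + 1) * hc + (-1 * c^6 - 2 * c^5 - 2 * c^4 - 2 * c^3 - 1 * c^2 - 1 * c) * htwo)
  have neo26 : (c^4 + c^3 + c : F) ≠ 1 := by
    intro h
    exact one_ne_zero (α := F) (by linear_combination (c^3 + c + 1) * h + (c^2) * hc + (-1 * c^7 - 1 * c^6 - 1 * c^5 - 2 * c^4 - 1 * c^2 + 1) * htwo)
  have nz29 : (c^4 + c^3 + c^2 + 1 : F) ≠ 0 := by
    intro h
    exact one_ne_zero (α := F) (by linear_combination (c^3 + 1) * h + (c^2) * hc + (-1 * c^7 - 1 * c^6 - 1 * c^5 - 1 * c^4 - 1 * c^3 - 1 * c^2) * htwo)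
  have neo29 : (c^4 + c^3 + c^2 + 1 : F) ≠ 1 := by
    intro h
    exact one_ne_zero (α := F) (by linear_combination (c^4 + c^3) * h + (c^3 + c^2 + 1) * hc + (-1 * c^8 - 2 * c^7 - 2 * c^6 - 2 * c^5 - 1 * c^4 - 1 * c^3 - 1 * c^2) * htwo)
  have nz30 : (c^4 + c^3 + c^2 + c : F) ≠ 0 := by
    intro h
    exact one_ne_zero (α := F) (by linear_combination (c) * h + (1) * hc + (-1 * c^5 - 1 * c^4 - 1 * c^3 - 1 * c^2) * htwo)
  have neo30 : (c^4 + c^3 + c^2 + c : F) ≠ 1 := by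
    intro h
    exact one_ne_zero (α := F) (by linear_combination (c^4 + c^2 + 1) * h + (c^3 + c) * hc + (-1 * c^8 - 1 * c^7 - 2 * c^6 - 2 * c^5 - 1 * c^4 - 2 * c^3 - 1 * c + 1) * htwo)
  have iv2 : (c : F)⁻¹ = c^4 + c^3 + c^2 + c := inv_eq_of_mul_eq_one_right (by linear_combination (1) * hc + (-1) * htwo)
  have iv3 : (c + 1 : F)⁻¹ = c^4 + c^2 := inv_eq_of_mul_eq_one_right (by linear_combination (1) * hc + (-1) * htwo)
  have iv4 : (c^2 : F)⁻¹ = c^3 + c^2 + c + 1 := inv_eq_of_mul_eq_one_right (by linear_combination (1) * hc + (-1) * htwo)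
  have iv5 : (c^2 + 1 : F)⁻¹ = c^3 + c^2 := inv_eq_of_mul_eq_one_right (by linear_combination (1) * hc + (-1) * htwo)
  have iv7 : (c^2 + c + 1 : F)⁻¹ = c^4 + c^3 + c := inv_eq_of_mul_eq_one_right (by linear_combination (c + 1) * hc + (-1) * htwo)
  have iv8 : (c^3 : F)⁻¹ = c^4 + c^3 + 1 := inv_eq_of_mul_eq_one_right (by linear_combination (c^2 + 0 * c - 1) * hc + (c^3) * htwo)
  have iv9 : (c^3 + 1 : F)⁻¹ = c^4 + c^3 + c^2 + 1 := inv_eq_of_mul_eq_one_right (by linear_combination (c^2 + 0 * c + 0) * hc + (c^3) * htwo)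
  have iv10 : (c^3 + c : F)⁻¹ = c^2 + c := inv_eq_of_mul_eq_one_right (by linear_combination (1) * hc + (-1) * htwo)
  have iv11 : (c^3 + c + 1 : F)⁻¹ = c^4 + c^3 + c + 1 := inv_eq_of_mul_eq_one_right (by linear_combination (c^2 + 0 * c + 0) * hc + (c^4 + c^3 + c) * htwo)
  have iv13 : (c^3 + c^2 + 1 : F)⁻¹ = c^3 + c^2 + c := inv_eq_of_mul_eq_one_right (by linear_combination (c + 1) * hc + (-1) * htwo)
  have iv16 : (c^4 : F)⁻¹ = c^4 + c := inv_eq_of_mul_eq_one_right (by linear_combination (c^3 - c^2 + 0 * c + 1) * hc + (-c^3 - 1) * htwo)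
  have iv19 : (c^4 + c + 1 : F)⁻¹ = c^4 + c^2 + c := inv_eq_of_mul_eq_one_right (by linear_combination (c^3 - c^2 + c + 1) * hc + (-c^3 + c^2 - 1) * htwo)
  have iv20 : (c^4 + c^2 : F)⁻¹ = c + 1 := inv_eq_of_mul_eq_one_right (by linear_combination (1) * hc + (-1) * htwo)
  have iv29 : (c^4 + c^3 + c^2 + 1 : F)⁻¹ = c^3 + 1 := inv_eq_of_mul_eq_one_right (by linear_combination (c^2 + 0 * c + 0) * hc + (c^3) * htwo)
  have G0 : swappedInv n (0:F) = 1 := by rw [Geval n hn hF]; simp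
  have G1 : swappedInv n (1:F) = 0 := by rw [Geval n hn hF]; simp
  have Gx : ∀ z : F, z ≠ 0 → z ≠ 1 → swappedInv n z = z⁻¹ := by
    intro z h0 h1; rw [Geval n hn hF, if_neg h0, if_neg h1]
  have Ginv : ∀ z : F, swappedInv n (swappedInv n z) = z := by
    intro z
    by_cases h0 : z = 0
    · rw [h0, G0, G1]
    by_cases h1 : z = 1
    · rw [h1, G1, G0]
    · rw [Gx z h0 h1, Gx z⁻¹ (inv_ne_zero h0) (fun h => h1 (by rw [← inv_inv z, h, inv_one])), inv_inv]
  have ha : c / (c ^ 2 + c + 1) = c^3 + 1 := by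
    rw [div_eq_iff nz7]; linear_combination (-1) * hc
  rw [ha]
  unfold cBCT
  have key : (univ.filter (fun p : F × F =>
      swappedInv n (p.1 + p.2) + c * swappedInv n p.1 = c ^ 2 + c + 1 ∧
      swappedInv n (p.1 + p.2 + (c^3 + 1)) + c⁻¹ * swappedInv n (p.1 + (c^3 + 1)) = c ^ 2 + c + 1)) =
      ({(c, c^3), (c^2, c^3 + c^2), (c^3 + 1, c^3), (c^3 + c^2 + 1, c^2 + c), (c^4 + c^2, c^4 + c^2)} : Finset (F × F)) := by
    ext ⟨x, g⟩
    simp only [mem_filter, mem_univ, true_and, mem_insert, mem_singleton, Prod.mk.injEq]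
    constructor
    · rintro ⟨h1, h2⟩
      by_cases hx0 : x = 0
      · rw [hx0] at h1 h2
        simp only [zero_add] at h1 h2
        rw [G0] at h1
        have ht : swappedInv n g = c^2 + 1 := by linear_combination h1 + (0:F) * hc
        have hg := congrArg (swappedInv n) ht
        rw [Ginv, Gx (c^2 + 1) nz5 neo5, iv5] at hg
        rw [hg] at h2
        have e1 : (c^3 + c^2 : F) + (c^3 + 1) = c^2 + 1 := by linear_combination (c^3) * htwo
        rw [e1, Gx (c^2 + 1) nz5 neo5, iv5, Gx (c^3 + 1) nz9 neo9, iv9, iv2] at h2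
        exact absurd (show (1:F) = 0 by linear_combination (c^3 + c + 1) * h2 + (c^6 + c^5 + c^2 + c) * hc + (-1 * c^11 - 2 * c^10 - 3 * c^9 - 4 * c^8 - 5 * c^7 - 6 * c^6 - 5 * c^5 - 4 * c^4 - 2 * c^3 - 1 * c^2 + 1) * htwo) one_ne_zero
      by_cases hx1 : x = 1
      · rw [hx1, G1] at h1
        rw [hx1] at h2
        have ht : swappedInv n (1 + g) = c^2 + c + 1 := by linear_combination h1
        have hg := congrArg (swappedInv n) ht
        rw [Ginv, Gx (c^2 + c + 1) nz7 neo7, iv7] at hg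
        have e1 : (1:F) + g + (c^3 + 1) = c^4 + c + 1 := by linear_combination hg + (c^3) * htwo
        have e2 : (1:F) + (c^3 + 1) = c^3 := by linear_combination (1) * htwo
        rw [e1, e2, Gx (c^4 + c + 1) nz19 neo19, iv19, Gx (c^3) nz8 neo8, iv8, iv2] at h2
        exact absurd (show (1:F) = 0 by linear_combination (c^4 + c^2) * h2 + (c^7 + c^6 + c^5 + c^4 + 1) * hc + (-1 * c^12 - 2 * c^11 - 3 * c^10 - 4 * c^9 - 4 * c^8 - 3 * c^7 - 3 * c^6 - 2 * c^5 - 1 * c^4 - 1 * c^3) * htwo) one_ne_zero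
      by_cases hxA : x = c^3 + 1
      · rw [hxA, Gx (c^3 + 1) nz9 neo9, iv9] at h1
        have ht : swappedInv n (c^3 + 1 + g) = 0 := by linear_combination h1 + (-1) * hc + (c^2 + 1) * htwo
        have hg := congrArg (swappedInv n) ht
        rw [Ginv, G0] at hg
        refine Or.inr (Or.inr (Or.inl ⟨hxA, ?_⟩))
        linear_combination hg + (-c^3) * htwo
      by_cases hxA1 : x = c^3
      · rw [hxA1, Gx (c^3) nz8 neo8, iv8] at h1
        have ht : swappedInv n (c^3 + g) = c^3 := by linear_combination h1 + (-1) * hc + (c^2 + 1) * htwo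
        have hg := congrArg (swappedInv n) ht
        rw [Ginv, Gx (c^3) nz8 neo8, iv8] at hg
        rw [hxA1] at h2
        have e1 : c^3 + g + (c^3 + 1) = c^4 := by linear_combination hg + (c^3 + 1) * htwo
        have e2 : (c^3 : F) + (c^3 + 1) = 1 := by linear_combination (c^3) * htwo
        rw [e1, e2, G1, Gx (c^4) nz16 neo16, iv16, iv2] at h2
        exact absurd (show (1:F) = 0 by linear_combination (c^4 + c^3 + c^2 + c + 1) * h2 + (c^3 + c) * hc + (-1 * c^8 - 1 * c^7 - 1 * c^6 - 1 * c^5 + c^2 + 1) * htwo) one_ne_zero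
      by_cases hy0 : x + g = 0
      · rw [hy0, G0, Gx x hx0 hx1] at h1
        have hxi := mul_inv_cancel₀ hx0
        have hq : (c^2 + c) * (x + (c^4 + c^2)) = 0 := by linear_combination (-x) * h1 + (-c) * hxi + (c + 0) * hc + (c * x * x⁻¹ - c) * htwo
        rcases mul_eq_zero.mp hq with h | h
        · exact absurd h nz6
        have hxv : x = c^4 + c^2 := by linear_combination (1) * h + (-c^4 - c^2) * htwo
        refine Or.inr (Or.inr (Or.inr (Or.inr ⟨hxv, ?_⟩)))
        linear_combination (1) * hy0 + (-1) * hxv + (-c^4 - c^2) * htwo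
      by_cases hy1 : x + g = 1
      · rw [hy1, G1, Gx x hx0 hx1] at h1
        have hxi := mul_inv_cancel₀ hx0
        have hq : (c^2 + c + 1) * (x + (c^3 + 1)) = 0 := by linear_combination (-x) * h1 + (-c) * hxi + (1) * hc + (c * x * x⁻¹) * htwo
        rcases mul_eq_zero.mp hq with h | h
        · exact absurd h nz7
        · exact absurd (show x = c^3 + 1 by linear_combination (1) * h + (-c^3 - 1) * htwo) hxA
      by_cases hyA : x + g = c^3 + 1
      · rw [hyA, Gx (c^3 + 1) nz9 neo9, iv9, Gx x hx0 hx1] at h1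
        have hxi := mul_inv_cancel₀ hx0
        have hq : (c^4 + c^3 + c) * (x + (c^3 + c^2 + c)) = 0 := by linear_combination (-x) * h1 + (-c) * hxi + (c^2 + c + 0) * hc + (c^4 * x + c^3 * x + c * x * x⁻¹ - c) * htwo
        rcases mul_eq_zero.mp hq with h | h
        · exact absurd h nz26
        have hxv : x = c^3 + c^2 + c := by linear_combination (1) * h + (-c^3 - c^2 - c) * htwo
        have e1 : x + g + (c^3 + 1) = 0 := by linear_combination (1) * hyA + (c^3 + 1) * htwo
        have e2 : x + (c^3 + 1) = c^2 + c + 1 := by linear_combination (1) * hxv + (c^3) * htwo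
        rw [e1, G0, e2, Gx (c^2 + c + 1) nz7 neo7, iv7, iv2] at h2
        exact absurd (show (1:F) = 0 by linear_combination (c^4 + c^3 + c + 1) * h2 + (c^7 + c^5 + c^3 + c + 1) * hc + (-1 * c^12 - 2 * c^11 - 3 * c^10 - 4 * c^9 - 5 * c^8 - 5 * c^7 - 4 * c^6 - 4 * c^5 - 2 * c^4 - 2 * c^3) * htwo) one_ne_zero
      by_cases hyA1 : x + g = c^3
      · rw [hyA1, Gx (c^3) nz8 neo8, iv8, Gx x hx0 hx1] at h1
        have hxi := mul_inv_cancel₀ hx0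
        have hq : (c^4 + c^3 + c^2 + c) * (x + c^2) = 0 := by linear_combination (-x) * h1 + (-c) * hxi + (c + 0) * hc + (c^4 * x + c^3 * x + c * x * x⁻¹ - c) * htwo
        rcases mul_eq_zero.mp hq with h | h
        · exact absurd h nz30
        have hxv : x = c^2 := by linear_combination (1) * h + (-c^2) * htwo
        refine Or.inr (Or.inl ⟨hxv, ?_⟩)
        linear_combination (1) * hyA1 + (-1) * hxv + (-c^2) * htwo
      · rw [Gx (x + g) hy0 hy1, Gx x hx0 hx1] at h1
        have hA3 : x + g + (c^3 + 1) ≠ 0 := fun h => hyA (by linear_combination (1) * h + (-c^3 - 1) * htwo)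
        have hA3' : x + g + (c^3 + 1) ≠ 1 := fun h => hyA1 (by linear_combination (1) * h + (-c^3) * htwo)
        have hA4 : x + (c^3 + 1) ≠ 0 := fun h => hxA (by linear_combination (1) * h + (-c^3 - 1) * htwo)
        have hA4' : x + (c^3 + 1) ≠ 1 := fun h => hxA1 (by linear_combination (1) * h + (-c^3) * htwo)
        rw [Gx (x + g + (c^3 + 1)) hA3 hA3', Gx (x + (c^3 + 1)) hA4 hA4', iv2] at h2
        have k1 := mul_inv_cancel₀ hx0
        have k2 := mul_inv_cancel₀ hy0
        have k3 := mul_inv_cancel₀ hA3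
        have k4 := mul_inv_cancel₀ hA4
        have H1 : x + c * (x + g) = (c^2 + c + 1) * (x * (x + g)) := by linear_combination (x^2 + x * g) * h1 + (-x) * k2 + (-c * x - c * g) * k1
        have H2 : x + (c^3 + 1) + (c^4 + c^3 + c^2 + c) * (x + g + (c^3 + 1)) = (c^2 + c + 1) * ((x + g + (c^3 + 1)) * (x + (c^3 + 1))) := by linear_combination (c^6 + 2 * c^3 * x + c^3 * g + 2 * c^3 + x^2 + x * g + 2 * x + g + 1) * h2 + (-c^3 - x - 1) * k3 + (-c^7 - c^6 - c^5 - c^4 * x - c^4 * g - 2 * c^4 - c^3 * x - c^3 * g - c^3 - c^2 * x - c^2 * g - c^2 - c * x - c * g - c) * k4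
        have h3 : x + g = c^2 * x + c := by linear_combination (c) * H1 + (c) * H2 + (c^4 - c^3 + 0 * c^2 + 2 * c * x + c * g + c - x - g + 0) * hc + (-c^4 + c^3 * x^2 + c^3 * x * g + c^2 * x^2 + c^2 * x * g + c * x^2 + c * x * g - c * x - c + x + g) * htwo
        have h4 : (c^2 + c + 1) * (c^2 * ((x + c) * (x + (c^3 + c^2 + 1)))) = 0 := by linear_combination (1) * H1 + (c^2 * x + c * x + c + x) * h3 + (c^3 + c^2 * x + c^2 + c * x + 0 * c + x + 0) * hc + (c^4 * x^2 + c^3 * x^2 + c^3 * x + c^2 * x^2 - c * x - c * g - x) * htwo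
        rcases mul_eq_zero.mp h4 with h | h
        · exact absurd h nz7
        rcases mul_eq_zero.mp h with h | h
        · exact absurd h nz4
        rcases mul_eq_zero.mp h with h | h
        · have hxv : x = c := by linear_combination (1) * h + (-c) * htwo
          refine Or.inl ⟨hxv, ?_⟩
          linear_combination (1) * h3 + (c^2 - 1) * hxv
        · have hxv : x = c^3 + c^2 + 1 := by linear_combination (1) * h + (-c^3 - c^2 - 1) * htwo
          refine Or.inr (Or.inr (Or.inr (Or.inl ⟨hxv, ?_⟩)))
          linear_combination (1) * h3 + (c^2 - 1) * hxv + (1) * hc + (-c^3 - c^2 - 1) * htwo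
    · rintro (⟨hX, hG⟩ | ⟨hX, hG⟩ | ⟨hX, hG⟩ | ⟨hX, hG⟩ | ⟨hX, hG⟩)
      · rw [hX, hG]
        refine ⟨?_, ?_⟩
        · rw [(by linear_combination (0:F) * hc : (c : F) + (c^3) = c^3 + c)]
          rw [Gx (c^3 + c) nz10 neo10, iv10, Gx (c) nz2 neo2, iv2]
          linear_combination (1) * hc + (-1) * htwo
        · rw [(by linear_combination (c^3) * htwo : (c : F) + (c^3) + (c^3 + 1) = c + 1)]
          rw [(by linear_combination (0:F) * hc : (c : F) + (c^3 + 1) = c^3 + c + 1)]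
          rw [Gx (c + 1) nz3 neo3, iv3, Gx (c^3 + c + 1) nz11 neo11, iv11, iv2]
          linear_combination (c^3 + c^2 + 0 * c + 1) * hc + (c^4 - 1) * htwo
      · rw [hX, hG]
        refine ⟨?_, ?_⟩
        · rw [(by linear_combination (c^2) * htwo : (c^2 : F) + (c^3 + c^2) = c^3)]
          rw [Gx (c^3) nz8 neo8, iv8, Gx (c^2) nz4 neo4, iv4]
          linear_combination (c^4 + c^3) * htwo
        · rw [(by linear_combination (c^3 + c^2) * htwo : (c^2 : F) + (c^3 + c^2) + (c^3 + 1) = 1)]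
          rw [(by linear_combination (0:F) * hc : (c^2 : F) + (c^3 + 1) = c^3 + c^2 + 1)]
          rw [G1, Gx (c^3 + c^2 + 1) nz13 neo13, iv13, iv2]
          linear_combination (c^2 + c + 1) * hc + (-c^2 - c - 1) * htwo
      · rw [hX, hG]
        refine ⟨?_, ?_⟩
        · rw [(by linear_combination (c^3) * htwo : (c^3 + 1 : F) + (c^3) = 1)]
          rw [G1, Gx (c^3 + 1) nz9 neo9, iv9]
          linear_combination (1) * hc + (-c^2 - 1) * htwo
        · rw [(by linear_combination (c^3 + 1) * htwo : (c^3 + 1 : F) + (c^3) + (c^3 + 1) = c^3)]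
          rw [(by linear_combination (c^3 + 1) * htwo : (c^3 + 1 : F) + (c^3 + 1) = 0)]
          rw [Gx (c^3) nz8 neo8, iv8, G0, iv2]
          linear_combination (c^4 + c^3) * htwo
      · rw [hX, hG]
        refine ⟨?_, ?_⟩
        · rw [(by linear_combination (c^2) * htwo : (c^3 + c^2 + 1 : F) + (c^2 + c) = c^3 + c + 1)]
          rw [Gx (c^3 + c + 1) nz11 neo11, iv11, Gx (c^3 + c^2 + 1) nz13 neo13, iv13]
          linear_combination (c^4 + c^3) * htwo
        · rw [(by linear_combination (c^3 + c^2 + 1) * htwo : (c^3 + c^2 + 1 : F) + (c^2 + c) + (c^3 + 1) = c)]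
          rw [(by linear_combination (c^3 + 1) * htwo : (c^3 + c^2 + 1 : F) + (c^3 + 1) = c^2)]
          rw [Gx (c) nz2 neo2, iv2, Gx (c^2) nz4 neo4, iv4]
          linear_combination (c^2 + c + 1) * hc + (c^4 + c^3 - 1) * htwo
      · rw [hX, hG]
        refine ⟨?_, ?_⟩
        · rw [(by linear_combination (c^4 + c^2) * htwo : (c^4 + c^2 : F) + (c^4 + c^2) = 0)]
          rw [G0, Gx (c^4 + c^2) nz20 neo20, iv20]
          linear_combination (0:F) * hc
        · rw [(by linear_combination (c^4 + c^2) * htwo : (c^4 + c^2 : F) + (c^4 + c^2) + (c^3 + 1) = c^3 + 1)]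
          rw [(by linear_combination (0:F) * hc : (c^4 + c^2 : F) + (c^3 + 1) = c^4 + c^3 + c^2 + 1)]
          rw [Gx (c^3 + 1) nz9 neo9, iv9, Gx (c^4 + c^3 + c^2 + 1) nz29 neo29, iv29, iv2]
          linear_combination (c^2 + 0 * c + 0) * hc + (c^4 + c^3) * htwo
  rw [key]
  have dd0 : ((c : F), (c^3 : F)) ∉ ({(c^2, c^3 + c^2), (c^3 + 1, c^3), (c^3 + c^2 + 1, c^2 + c), (c^4 + c^2, c^4 + c^2)} : Finset (F × F)) := by
    simp only [mem_insert, mem_singleton, Prod.mk.injEq, not_or]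
    exact ⟨fun h => one_ne_zero (α := F) (by linear_combination (c^3 + c) * h.1 + (1) * hc + (-1 * c^4 - 1 * c^2) * htwo), fun h => one_ne_zero (α := F) (by linear_combination (c^4 + c^3 + c + 1) * h.1 + (c^2) * hc + (-1 * c^5 + c^3 - 1 * c^2 + 1) * htwo), fun h => one_ne_zero (α := F) (by linear_combination (c^2) * h.1 + (1) * hc + (-1 * c^3) * htwo), fun h => one_ne_zero (α := F) (by linear_combination (c^4 + c + 1) * h.1 + (c^3 + c^2 + c + 1) * hc + (-1 * c^7 - 1 * c^6 - 2 * c^5 - 1 * c^4 - 1 * c^3 - 1 * c^2 - 1 * c) * htwo)⟩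
  have dd1 : ((c^2 : F), (c^3 + c^2 : F)) ∉ ({(c^3 + 1, c^3), (c^3 + c^2 + 1, c^2 + c), (c^4 + c^2, c^4 + c^2)} : Finset (F × F)) := by
    simp only [mem_insert, mem_singleton, Prod.mk.injEq, not_or]
    exact ⟨fun h => one_ne_zero (α := F) (by linear_combination (c^3 + c^2 + c) * h.1 + (c + 1) * hc + (-1 * c^5 - 1 * c^4 - 1 * c^3) * htwo), fun h => one_ne_zero (α := F) (by linear_combination (c^4 + c^3 + c^2 + 1) * h.1 + (c^2) * hc + (c^3 + 1) * htwo), fun h => one_ne_zero (α := F) (by linear_combination (c^4 + c) * h.1 + (c^3 + c^2 + 1) * hc + (-1 * c^7 - 1 * c^6 - 1 * c^5 - 1 * c^4 - 1 * c^3 - 1 * c^2) * htwo)⟩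
  have dd2 : ((c^3 + 1 : F), (c^3 : F)) ∉ ({(c^3 + c^2 + 1, c^2 + c), (c^4 + c^2, c^4 + c^2)} : Finset (F × F)) := by
    simp only [mem_insert, mem_singleton, Prod.mk.injEq, not_or]
    exact ⟨fun h => one_ne_zero (α := F) (by linear_combination (c^3 + c^2 + c + 1) * h.1 + (1) * hc + (0) * htwo), fun h => one_ne_zero (α := F) (by linear_combination (c^3 + 1) * h.1 + (c^2) * hc + (-1 * c^6 - 1 * c^3) * htwo)⟩
  have dd3 : ((c^3 + c^2 + 1 : F), (c^2 + c : F)) ∉ ({(c^4 + c^2, c^4 + c^2)} : Finset (F × F)) := by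
    simp only [mem_insert, mem_singleton, Prod.mk.injEq, not_or]
    exact fun h => one_ne_zero (α := F) (by linear_combination (c^3) * h.1 + (c^2 + 1) * hc + (-1 * c^6 - 1 * c^5 - 1 * c^4 - 1 * c^3 - 1 * c^2) * htwo)
  rw [card_insert_of_notMem dd0, card_insert_of_notMem dd1, card_insert_of_notMem dd2, card_insert_of_notMem dd3, card_singleton]

theorem stmt_17 (n : ℕ) (hn : 5 ≤ n) (hn5 : 5 ∣ n)
    (F : Type*) [Field F] [Fintype F] [DecidableEq F]
    (hF : Fintype.card F = 2 ^ n) :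
    (∃ c : F, c ^ 5 + c ^ 4 + c ^ 3 + c ^ 2 + 1 = 0) ∧
      ∀ c : F, c ^ 5 + c ^ 4 + c ^ 3 + c ^ 2 + 1 = 0 →
        c ≠ 0 ∧ c ≠ 1 ∧ c ^ 2 + c + 1 ≠ 0 ∧
          cBCT F n c (c / (c ^ 2 + c + 1)) (c ^ 2 + c + 1) = 5 := by
  have htwo : (2:F) = 0 := char2 n hn hF
  refine ⟨exists_c n hn hn5 hF htwo, fun c hc => ?_⟩
  have hc0 : c ≠ 0 := fun h => one_ne_zero (α := F) (by linear_combination (c^4 + c^3 + c^2 + c) * h + (1) * hc + (-1 * c^5 - 1 * c^4 - 1 * c^3 - 1 * c^2) * htwo)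
  have hc1 : c ≠ 1 := fun h => one_ne_zero (α := F) (by linear_combination (c^4 + c^2) * h + (1) * hc + (-1 * c^5 - 1 * c^3) * htwo)
  have hb : c ^ 2 + c + 1 ≠ 0 := fun h => one_ne_zero (α := F) (by linear_combination (c^4 + c^3 + c) * h + (c + 1) * hc + (-1 * c^6 - 2 * c^5 - 2 * c^4 - 2 * c^3 - 1 * c^2 - 1 * c) * htwo)
  exact ⟨hc0, hc1, hb, main_count n hn hF c hc⟩
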